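/- In ℚ[[u]] the following identity holds: 1 + Σ_{j=2}^{∞} q^{2j−3}u^{2j−3}·α_j(u) + α₁(u)·Σ_{j=1}^{∞} q^{4j−1}(q−1)u^{3j−1} = (1 − q³u³)(1 − q⁶u³) · ((1 − q⁴u³)²)⁻¹, where both infinite sums converge in ℚ[[u]] (coefficientwise, since the order of the j-th term tends to infinity with j). -/

import Mathlib

open PowerSeries

/-- `α₁(u) = −(q²−1)(1−q³u³)·u·(1−q⁴u³)⁻¹ ∈ ℚ[[u]]`. -/
noncomputable def alphaOne (q : ℕ) : PowerSeries ℚ :=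
  -(C ((q : ℚ) ^ 2 - 1)) * (1 - C ((q : ℚ) ^ 3) * X ^ 3) * X *
    (1 - C ((q : ℚ) ^ 4) * X ^ 3)⁻¹

/-- `α_t(u) = (−(q−1)q^{2t−1}uᵗ + (q−1)q^{2t+1}u^{t+3})·(1−q⁴u³)⁻¹ ∈ ℚ[[u]]` for `t ≥ 2`. -/
noncomputable def alphaT (q t : ℕ) : PowerSeries ℚ :=
  (-(C (((q : ℚ) - 1) * (q : ℚ) ^ (2 * t - 1))) * X ^ t +
      C (((q : ℚ) - 1) * (q : ℚ) ^ (2 * t + 1)) * X ^ (t + 3)) *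
    (1 - C ((q : ℚ) ^ 4) * X ^ 3)⁻¹

private lemma alpha_key (q n : ℕ) :
    1 + (∑ j ∈ Finset.Icc 2 (n + 1),
        C ((q : ℚ) ^ (2 * j - 3)) * X ^ (2 * j - 3) * alphaT q j) +
      alphaOne q *
        ∑ j ∈ Finset.Icc 1 (n + 1),
          C ((q : ℚ) ^ (4 * j - 1) * ((q : ℚ) - 1)) * X ^ (3 * j - 1) =
    (1 - C ((q : ℚ) ^ 3) * X ^ 3) * (1 - C ((q : ℚ) ^ 6) * X ^ 3) *
        ((1 - C ((q : ℚ) ^ 4) * X ^ 3) ^ 2)⁻¹ +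
      X ^ (3 * (n + 1)) *
        (((C (q : ℚ)) ^ (4 * (n + 1)) *
            ((1 - C (q : ℚ)) * ((C (q : ℚ)) ^ 2 * X ^ 3 - 1) +
              ((C (q : ℚ)) ^ 2 - 1) * (C (q : ℚ) - 1) * (C (q : ℚ)) ^ 3 * X ^ 3 *
                (1 - (C (q : ℚ)) ^ 3 * X ^ 3))) *
          ((1 - C ((q : ℚ) ^ 4) * X ^ 3) ^ 2)⁻¹) := by
  have hWc : constantCoeff (1 - (C (q : ℚ)) ^ 4 * X ^ 3) ≠ 0 := by
    simp
  have hW2c : constantCoeff ((1 - (C (q : ℚ)) ^ 4 * X ^ 3) ^ 2) ≠ 0 := by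
    simp
  have h1 := PowerSeries.inv_mul_cancel _ hWc
  have h2 := PowerSeries.inv_mul_cancel _ hW2c
  have hWne : (1 - (C (q : ℚ)) ^ 4 * X ^ 3) ≠ 0 := by
    intro h
    exact hWc (by rw [h]; simp)
  have g1 := geom_sum_mul ((C (q : ℚ)) ^ 4 * X ^ 3) n
  have g2 := geom_sum_mul ((C (q : ℚ)) ^ 4 * X ^ 3) (n + 1)
  have hA : (∑ j ∈ Finset.Icc 2 (n + 1),
      C ((q : ℚ) ^ (2 * j - 3)) * X ^ (2 * j - 3) * alphaT q j) =
      (∑ k ∈ Finset.range n, ((C (q : ℚ)) ^ 4 * X ^ 3) ^ k) *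
        (((C (q : ℚ)) ^ 4 * X ^ 3) *
          ((C (q : ℚ) - 1) * ((C (q : ℚ)) ^ 2 * X ^ 3 - 1)) *
          (1 - (C (q : ℚ)) ^ 4 * X ^ 3)⁻¹) := by
    rw [← Finset.Ico_add_one_right_eq_Icc, Finset.sum_Ico_eq_sum_range, Finset.sum_mul,
      show n + 1 + 1 - 2 = n from by omega]
    refine Finset.sum_congr rfl fun k _ => ?_
    simp only [alphaT]
    rw [show 2 * (2 + k) - 3 = 2 * k + 1 from by omega,
      show 2 * (2 + k) - 1 = 2 * k + 3 from by omega,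
      show 2 * (2 + k) + 1 = 2 * k + 5 from by omega]
    simp only [map_mul, map_pow, map_sub, map_one, map_neg]
    ring
  have hB : (∑ j ∈ Finset.Icc 1 (n + 1),
      C ((q : ℚ) ^ (4 * j - 1) * ((q : ℚ) - 1)) * X ^ (3 * j - 1)) =
      (∑ k ∈ Finset.range (n + 1), ((C (q : ℚ)) ^ 4 * X ^ 3) ^ k) *
        ((C (q : ℚ)) ^ 3 * (C (q : ℚ) - 1) * X ^ 2) := by
    rw [← Finset.Ico_add_one_right_eq_Icc, Finset.sum_Ico_eq_sum_range, Finset.sum_mul,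
      show n + 1 + 1 - 1 = n + 1 from by omega]
    refine Finset.sum_congr rfl fun k _ => ?_
    rw [show 4 * (1 + k) - 1 = 4 * k + 3 from by omega,
      show 3 * (1 + k) - 1 = 3 * k + 2 from by omega]
    simp only [map_mul, map_pow, map_sub, map_one]
    ring
  rw [hA, hB]
  simp only [alphaOne, map_mul, map_pow, map_sub, map_one, map_neg]
  apply mul_right_cancel₀ (pow_ne_zero 2 hWne)
  linear_combination
    ((∑ k ∈ Finset.range n, ((C (q : ℚ)) ^ 4 * X ^ 3) ^ k) *
        (((C (q : ℚ)) ^ 4 * X ^ 3) *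
          ((C (q : ℚ) - 1) * ((C (q : ℚ)) ^ 2 * X ^ 3 - 1))) *
        (1 - (C (q : ℚ)) ^ 4 * X ^ 3) +
      (-((C (q : ℚ)) ^ 2 - 1) * (1 - (C (q : ℚ)) ^ 3 * X ^ 3) * X) *
        (∑ k ∈ Finset.range (n + 1), ((C (q : ℚ)) ^ 4 * X ^ 3) ^ k) *
        ((C (q : ℚ)) ^ 3 * (C (q : ℚ) - 1) * X ^ 2) *
        (1 - (C (q : ℚ)) ^ 4 * X ^ 3)) * h1 +
    (-((1 - (C (q : ℚ)) ^ 3 * X ^ 3) * (1 - (C (q : ℚ)) ^ 6 * X ^ 3) +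
        X ^ (3 * (n + 1)) *
          ((C (q : ℚ)) ^ (4 * (n + 1)) *
            ((1 - C (q : ℚ)) * ((C (q : ℚ)) ^ 2 * X ^ 3 - 1) +
              ((C (q : ℚ)) ^ 2 - 1) * (C (q : ℚ) - 1) * (C (q : ℚ)) ^ 3 * X ^ 3 *
                (1 - (C (q : ℚ)) ^ 3 * X ^ 3))))) * h2 +
    (-(((C (q : ℚ)) ^ 4 * X ^ 3) *
        ((C (q : ℚ) - 1) * ((C (q : ℚ)) ^ 2 * X ^ 3 - 1)))) * g1 +
    (-((-((C (q : ℚ)) ^ 2 - 1) * (1 - (C (q : ℚ)) ^ 3 * X ^ 3) * X) *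
        ((C (q : ℚ)) ^ 3 * (C (q : ℚ) - 1) * X ^ 2))) * g2

/-- In `ℚ[[u]]`:
`1 + Σ_{j=2}^{∞} q^{2j−3}u^{2j−3}·α_j(u) + α₁(u)·Σ_{j=1}^{∞} q^{4j−1}(q−1)u^{3j−1}
  = (1 − q³u³)(1 − q⁶u³)·((1 − q⁴u³)²)⁻¹`,
where the infinite sums converge coefficientwise: for each degree `d`, the `u^d`-coefficient
of the partial sums up to `J'` is eventually (in `J'`) equal to that of the right-hand side. -/
theorem alpha_series_identity (q : ℕ) (hq : 2 ≤ q) :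
    ∀ d : ℕ, ∃ J : ℕ, ∀ J' : ℕ, J ≤ J' →
      PowerSeries.coeff d
          (1 + (∑ j ∈ Finset.Icc 2 J',
              C ((q : ℚ) ^ (2 * j - 3)) * X ^ (2 * j - 3) * alphaT q j) +
            alphaOne q *
              ∑ j ∈ Finset.Icc 1 J',
                C ((q : ℚ) ^ (4 * j - 1) * ((q : ℚ) - 1)) * X ^ (3 * j - 1)) =
        PowerSeries.coeff d
          ((1 - C ((q : ℚ) ^ 3) * X ^ 3) * (1 - C ((q : ℚ) ^ 6) * X ^ 3) *
            ((1 - C ((q : ℚ) ^ 4) * X ^ 3) ^ 2)⁻¹) := by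
  intro d
  refine ⟨d + 1, fun J' hJ' => ?_⟩
  obtain ⟨n, rfl⟩ : ∃ n, J' = n + 1 := ⟨J' - 1, by omega⟩
  rw [alpha_key q n, map_add, PowerSeries.coeff_X_pow_mul', if_neg (by omega), add_zero]
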